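/- For any d ≥ 1 and 0 ≤ h ≤ d − 1, the number of connected multigraphs α on vertex set [n] with total number of edges |α| = d, number of spanned vertices |V(α)| = d + 1 − h, and such that both vertex 1 and vertex 2 lie in V(α), is at most n^{d−h−1} · d^{d+h}. -/

import Mathlib

def edgeGraph {n : ℕ} (α : Sym2 (Fin n) → ℕ) : SimpleGraph (Fin n) :=
  SimpleGraph.fromRel (fun i j => α s(i, j) ≠ 0)

def vertexSet {n : ℕ} (α : Sym2 (Fin n) → ℕ) : Set (Fin n) :=
  {v | ∃ e : Sym2 (Fin n), α e ≠ 0 ∧ v ∈ e}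

def MGConnected {n : ℕ} (α : Sym2 (Fin n) → ℕ) : Prop :=
  (vertexSet α).Nonempty ∧
    ∀ u ∈ vertexSet α, ∀ v ∈ vertexSet α, (edgeGraph α).Reachable u v

private lemma two_pow_le_two_mul_factorial : ∀ i : ℕ, 2 ^ i ≤ 2 * i.factorial
  | 0 => by norm_num
  | 1 => by norm_num [Nat.factorial]
  | (i+2) => by
      have ih := two_pow_le_two_mul_factorial (i+1)
      rw [pow_succ, Nat.factorial_succ]
      calc 2 ^ (i+1) * 2 ≤ 2 * (i+1).factorial * 2 := Nat.mul_le_mul_right _ ih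
        _ ≤ 2 * ((i + 2) * (i+1).factorial) := by nlinarith [Nat.factorial_pos (i+1)]

private lemma succ_pow_le_four_mul_pow (n : ℕ) : (n + 1) ^ n ≤ 4 * n ^ n := by
  have key : ∀ i ∈ Finset.range (n+1), n ^ i * n.choose i * 2 ^ n ≤ 2 * n ^ n * 2 ^ i := by
    intro i hi
    rw [Finset.mem_range] at hi
    have hin : i ≤ n := by omega
    have h1 : (n - i).factorial * n.choose i ≤ n ^ (n - i) := by
      rw [← Nat.choose_symm hin, ← Nat.descFactorial_eq_factorial_mul_choose]
      exact Nat.descFactorial_le_pow n (n - i)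
    have h2 : 2 ^ (n - i) ≤ 2 * (n - i).factorial := two_pow_le_two_mul_factorial (n - i)
    have hsplit : 2 ^ n = 2 ^ (n - i) * 2 ^ i := by
      rw [← pow_add]; congr 1; omega
    have hnn : n ^ i * n ^ (n - i) = n ^ n := by rw [← pow_add]; congr 1; omega
    calc n ^ i * n.choose i * 2 ^ n = n ^ i * (n.choose i * 2 ^ (n - i)) * 2 ^ i := by
          rw [hsplit]; ring
      _ ≤ n ^ i * (n.choose i * (2 * (n - i).factorial)) * 2 ^ i :=
          Nat.mul_le_mul_right _ (Nat.mul_le_mul_left _ (Nat.mul_le_mul_left _ h2))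
      _ = n ^ i * (2 * ((n - i).factorial * n.choose i)) * 2 ^ i := by ring
      _ ≤ n ^ i * (2 * n ^ (n - i)) * 2 ^ i :=
          Nat.mul_le_mul_right _ (Nat.mul_le_mul_left _ (Nat.mul_le_mul_left _ h1))
      _ = 2 * n ^ n * 2 ^ i := by rw [← hnn]; ring
  have hbin : (n + 1) ^ n = ∑ i ∈ Finset.range (n+1), n ^ i * n.choose i := by
    rw [add_pow]; simp
  have hgeo : ∑ i ∈ Finset.range (n+1), 2 ^ i ≤ 2 ^ (n+1) := by
    clear key hbin
    induction (n+1) with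
    | zero => simp
    | succ m ih => rw [Finset.sum_range_succ, pow_succ]; omega
  have hmain : (n + 1) ^ n * 2 ^ n ≤ 4 * n ^ n * 2 ^ n := by
    calc (n + 1) ^ n * 2 ^ n = ∑ i ∈ Finset.range (n+1), n ^ i * n.choose i * 2 ^ n := by
          rw [hbin, Finset.sum_mul]
      _ ≤ ∑ i ∈ Finset.range (n+1), 2 * n ^ n * 2 ^ i := Finset.sum_le_sum key
      _ = 2 * n ^ n * ∑ i ∈ Finset.range (n+1), 2 ^ i := by rw [Finset.mul_sum]
      _ ≤ 2 * n ^ n * 2 ^ (n+1) := Nat.mul_le_mul_left _ hgeo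
      _ = 4 * n ^ n * 2 ^ n := by ring
  exact Nat.le_of_mul_le_mul_right hmain (Nat.pow_pos (by norm_num))

private lemma succ_pow_le_fact {m : ℕ} (hm : 3 ≤ m) :
    (m + 1) ^ m ≤ 2 ^ m * m.factorial * (m - 1).factorial := by
  induction m, hm using Nat.le_induction with
  | base => norm_num [Nat.factorial]
  | succ m hm ih =>
    have h4 : (m + 2) ^ (m + 1) ≤ 4 * (m + 1) ^ (m + 1) := succ_pow_le_four_mul_pow (m + 1)
    have hmm : m - 1 + 1 = m := by omega
    have hfm : m.factorial = m * (m - 1).factorial := by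
      conv_lhs => rw [← hmm, Nat.factorial_succ, hmm]
    have h42 : 4 ≤ 2 * m := by omega
    rw [Nat.add_sub_cancel, Nat.factorial_succ, hfm]
    calc (m + 1 + 1) ^ (m + 1) = (m + 2) ^ (m + 1) := by ring_nf
      _ ≤ 4 * (m + 1) ^ (m + 1) := h4
      _ = 4 * ((m + 1) * (m + 1) ^ m) := by ring
      _ ≤ 4 * ((m + 1) * (2 ^ m * (m * (m - 1).factorial) * (m - 1).factorial)) := by
          refine Nat.mul_le_mul_left _ (Nat.mul_le_mul_left _ ?_)
          rw [← hfm]; exact ih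
      _ ≤ (2 * m) * ((m + 1) * (2 ^ m * (m * (m - 1).factorial) * (m - 1).factorial)) :=
          Nat.mul_le_mul_right _ h42
      _ = 2 ^ (m + 1) * ((m + 1) * (m * (m - 1).factorial)) * (m * (m - 1).factorial) := by ring

private lemma choose_triangle_le (m : ℕ) (hm : 1 ≤ m) :
    ((m + 1).choose 2).choose m ≤ (m - 1).factorial * m ^ m := by
  rcases lt_or_ge m 3 with hlt | hge
  · interval_cases m <;> decide
  · have hdvd : 2 ∣ (m + 1) * m := by
      have h := Nat.even_mul_succ_self m
      rw [mul_comm] at h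
      exact h.two_dvd
    have h2P : 2 * ((m + 1).choose 2) = (m + 1) * m := by
      rw [Nat.choose_two_right, Nat.add_sub_cancel, Nat.mul_div_cancel' hdvd]
    set P := (m + 1).choose 2 with hP
    have hd1 : P.choose m * m.factorial * 2 ^ m ≤ ((m + 1) * m) ^ m := by
      have hdesc : m.factorial * P.choose m ≤ P ^ m := by
        rw [← Nat.descFactorial_eq_factorial_mul_choose]
        exact Nat.descFactorial_le_pow P m
      calc P.choose m * m.factorial * 2 ^ m = (m.factorial * P.choose m) * 2 ^ m := by ring
        _ ≤ P ^ m * 2 ^ m := Nat.mul_le_mul_right _ hdesc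
        _ = (2 * P) ^ m := by rw [mul_pow]; ring
        _ = ((m + 1) * m) ^ m := by rw [h2P]
    have hfin : P.choose m * (m.factorial * 2 ^ m) ≤
        ((m - 1).factorial * m ^ m) * (m.factorial * 2 ^ m) := by
      calc P.choose m * (m.factorial * 2 ^ m) = P.choose m * m.factorial * 2 ^ m := by ring
        _ ≤ ((m + 1) * m) ^ m := hd1
        _ = (m + 1) ^ m * m ^ m := mul_pow _ _ _
        _ ≤ (2 ^ m * m.factorial * (m - 1).factorial) * m ^ m :=
            Nat.mul_le_mul_right _ (succ_pow_le_fact hge)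
        _ = ((m - 1).factorial * m ^ m) * (m.factorial * 2 ^ m) := by ring
    exact Nat.le_of_mul_le_mul_right hfin (by positivity)

private lemma edgeGraph_adj {n : ℕ} (α : Sym2 (Fin n) → ℕ) (x y : Fin n) :
    (edgeGraph α).Adj x y ↔ x ≠ y ∧ α s(x, y) ≠ 0 := by
  rw [edgeGraph, SimpleGraph.fromRel_adj, show s(y, x) = s(x, y) from Sym2.eq_swap, or_self]

private lemma card_le_edges {n : ℕ} (α : Sym2 (Fin n) → ℕ)
    (hconn : MGConnected α) (hfin : (vertexSet α).Finite)
    (r : Fin n) (hr : r ∈ vertexSet α) :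
    (hfin.toFinset.erase r).card ≤ (Finset.univ.filter fun e => α e ≠ 0).card := by
  classical
  set G := edgeGraph α with hG
  have hclaim : ∀ x ∈ hfin.toFinset.erase r, ∃ y, G.Adj x y ∧ G.dist y r < G.dist x r := by
    intro x hx
    rw [Finset.mem_erase, Set.Finite.mem_toFinset] at hx
    obtain ⟨hxr, hxV⟩ := hx
    have hreach : G.Reachable x r := hconn.2 x hxV r hr
    have hdz : G.dist x r ≠ 0 := by
      rw [SimpleGraph.dist_ne_zero_iff_ne_and_reachable]
      exact ⟨hxr, hreach⟩
    obtain ⟨p, hp⟩ := SimpleGraph.exists_walk_of_dist_ne_zero hdz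
    cases p with
    | nil => exact absurd rfl hxr
    | @cons _ y _ ha q =>
      refine ⟨y, ha, ?_⟩
      have h1 : G.dist y r ≤ q.length := SimpleGraph.dist_le q
      rw [SimpleGraph.Walk.length_cons] at hp
      omega
  apply Finset.card_le_card_of_injOn
    (fun x => if hx : ∃ y, G.Adj x y ∧ G.dist y r < G.dist x r then s(x, hx.choose) else s(x, x))
  · intro x hx
    have hc := hclaim x hx
    rw [Finset.mem_coe, Finset.mem_filter]
    refine ⟨Finset.mem_univ _, ?_⟩
    simp only [dif_pos hc]
    exact ((edgeGraph_adj α x hc.choose).mp hc.choose_spec.1).2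
  · intro x hx x' hx' heq
    rw [Finset.mem_coe] at hx hx'
    have hcx := hclaim x hx
    have hcx' := hclaim x' hx'
    simp only [dif_pos hcx, dif_pos hcx'] at heq
    rw [Sym2.eq_iff] at heq
    rcases heq with ⟨h1, _⟩ | ⟨h1, h2⟩
    · exact h1
    · exfalso
      have s1 := hcx.choose_spec.2
      have s2 := hcx'.choose_spec.2
      rw [h2] at s1
      rw [← h1] at s2
      omega

section Transport

variable {n v : ℕ}

noncomputable def fEmb (W : Finset (Fin n)) (hW : W.card = v) : Fin v → Fin n :=
  fun y => ((W.orderIsoOfFin hW) y : Fin n)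

noncomputable def fProj (W : Finset (Fin n)) (hW : W.card = v) (hv : 0 < v) : Fin n → Fin v :=
  fun x => if hx : x ∈ W then (W.orderIsoOfFin hW).symm ⟨x, hx⟩ else ⟨0, hv⟩

lemma fEmb_mem (W : Finset (Fin n)) (hW : W.card = v) (y : Fin v) : fEmb W hW y ∈ W :=
  (W.orderIsoOfFin hW y).2

lemma fEmb_injective (W : Finset (Fin n)) (hW : W.card = v) : Function.Injective (fEmb W hW) :=
  fun _ _ hab => (W.orderIsoOfFin hW).injective (Subtype.ext hab)

lemma fEmb_fProj (W : Finset (Fin n)) (hW : W.card = v) (hv : 0 < v) {x : Fin n} (hx : x ∈ W) :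
    fEmb W hW (fProj W hW hv x) = x := by
  simp only [fEmb, fProj, dif_pos hx]
  rw [OrderIso.apply_symm_apply]

lemma fProj_injOn (W : Finset (Fin n)) (hW : W.card = v) (hv : 0 < v) :
    ∀ x ∈ W, ∀ y ∈ W, fProj W hW hv x = fProj W hW hv y → x = y :=
  fun x hx y hy hxy => by
    rw [← fEmb_fProj W hW hv hx, ← fEmb_fProj W hW hv hy, hxy]

lemma map_fProj_not_isDiag (W : Finset (Fin n)) (hW : W.card = v) (hv : 0 < v)
    (e : Sym2 (Fin n)) (he : (∀ x ∈ e, x ∈ W) ∧ ¬ e.IsDiag) :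
    ¬ (Sym2.map (fProj W hW hv) e).IsDiag := by
  obtain ⟨hmem, hdiag⟩ := he
  revert hmem hdiag
  refine Sym2.ind (fun a b => ?_) e
  intro hmem hdiag
  rw [Sym2.map_pair_eq, Sym2.mk_isDiag_iff]
  rw [Sym2.mk_isDiag_iff] at hdiag
  intro hpq
  exact hdiag (fProj_injOn W hW hv a (hmem a (Sym2.mem_mk_left a b)) b
    (hmem b (Sym2.mem_mk_right a b)) hpq)

/-- transported edge -/
noncomputable def trE (W : Finset (Fin n)) (hW : W.card = v) (e : Sym2 (Fin n))
    (he : (∀ x ∈ e, x ∈ W) ∧ ¬ e.IsDiag) : {e' : Sym2 (Fin v) // ¬ e'.IsDiag} :=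
  ⟨Sym2.map (fProj W hW (hW ▸ Finset.card_pos.mpr ⟨_, he.1 _ (Sym2.out_fst_mem e)⟩)) e,
    map_fProj_not_isDiag W hW _ e he⟩

lemma trE_val (W : Finset (Fin n)) (hW : W.card = v) (e : Sym2 (Fin n))
    (he : (∀ x ∈ e, x ∈ W) ∧ ¬ e.IsDiag) (hv : 0 < v) :
    (trE W hW e he).1 = Sym2.map (fProj W hW hv) e := rfl

lemma untr_trE (W : Finset (Fin n)) (hW : W.card = v) (e : Sym2 (Fin n))
    (he : (∀ x ∈ e, x ∈ W) ∧ ¬ e.IsDiag) :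
    Sym2.map (fEmb W hW) (trE W hW e he).1 = e := by
  have hv : 0 < v := hW ▸ Finset.card_pos.mpr ⟨_, he.1 _ (Sym2.out_fst_mem e)⟩
  rw [trE_val W hW e he hv, Sym2.map_map]
  obtain ⟨hmem, -⟩ := he
  revert hmem
  refine Sym2.ind (fun a b => ?_) e
  intro hmem
  rw [Sym2.map_pair_eq]
  simp only [Function.comp_apply]
  rw [fEmb_fProj W hW hv (hmem a (Sym2.mem_mk_left a b)),
    fEmb_fProj W hW hv (hmem b (Sym2.mem_mk_right a b))]

end Transport

open Classical in
noncomputable def Decode (n k hnum : ℕ) (v1 v2 : Fin n)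
    (ω : {W : Finset (Fin n) // W.card = k} ×
      {A : Finset {e' : Sym2 (Fin (k+2)) // ¬ e'.IsDiag} // A.card = k+1} ×
      (Fin hnum → {e' : Sym2 (Fin (k+2)) // ¬ e'.IsDiag})) : Sym2 (Fin n) → ℕ :=
  fun e =>
  if hc : (ω.1.1 ∪ {v1, v2}).card = k + 2 then
    (if e ∈ ω.2.1.1.image (fun e' => Sym2.map (fEmb (ω.1.1 ∪ {v1, v2}) hc) e'.1) then 1 else 0) +
    (if hg : (∀ x ∈ e, x ∈ ω.1.1 ∪ {v1, v2}) ∧ ¬ e.IsDiag then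
      Multiset.count (trE (ω.1.1 ∪ {v1, v2}) hc e hg) ↑(List.ofFn ω.2.2) else 0)
  else 0

private lemma exists_ofFn_eq {X : Type*} {m : ℕ} (M : Multiset X) (hM : Multiset.card M = m) :
    ∃ t : Fin m → X, (↑(List.ofFn t) : Multiset X) = M := by
  subst hM
  rw [show Multiset.card M = M.toList.length from (Multiset.length_toList M).symm]
  exact ⟨M.toList.get, by rw [List.ofFn_get, Multiset.coe_toList]⟩

private lemma main_aux (n d h : ℕ) (hn : 2 ≤ n) (hd : 1 ≤ d) (hh : h ≤ d - 1)
    (v1 v2 : Fin n) (hv12 : v1 ≠ v2) :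
    {α : Sym2 (Fin n) → ℕ |
        (∀ e : Sym2 (Fin n), e.IsDiag → α e = 0) ∧
        MGConnected α ∧
        (∑ e : Sym2 (Fin n), α e) = d ∧
        (vertexSet α).ncard = d + 1 - h ∧
        v1 ∈ vertexSet α ∧ v2 ∈ vertexSet α}.ncard ≤
      n ^ (d - h - 1) * d ^ (d + h) := by
  classical
  set k := d - h - 1 with hk
  set S := {α : Sym2 (Fin n) → ℕ |
        (∀ e : Sym2 (Fin n), e.IsDiag → α e = 0) ∧
        MGConnected α ∧
        (∑ e : Sym2 (Fin n), α e) = d ∧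
        (vertexSet α).ncard = d + 1 - h ∧
        v1 ∈ vertexSet α ∧ v2 ∈ vertexSet α} with hS
  by_cases hnk : k + 2 ≤ n
  case neg =>
    have hempty : S = ∅ := by
      rw [hS, Set.eq_empty_iff_forall_notMem]
      rintro α ⟨-, -, -, hcard, -⟩
      have h1 : (vertexSet α).ncard ≤ n := by
        have h2 := Set.ncard_le_ncard (Set.subset_univ (vertexSet α)) Set.finite_univ
        rwa [Set.ncard_univ, Nat.card_eq_fintype_card, Fintype.card_fin] at h2
      omega
    rw [hempty, Set.ncard_empty]
    exact Nat.zero_le _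
  case pos =>
  have hrange : S ⊆ Set.range (Decode n k h v1 v2) := by
    intro α hα
    rw [hS, Set.mem_setOf_eq] at hα
    obtain ⟨hdiag, hconn, hsum, hncard, hm1, hm2⟩ := hα
    have hfin : (vertexSet α).Finite := Set.toFinite _
    set Vf := hfin.toFinset with hVf
    have hVfcard : Vf.card = k + 2 := by
      rw [hVf, ← Set.ncard_eq_toFinset_card _ hfin, hncard]
      omega
    have hv1Vf : v1 ∈ Vf := hfin.mem_toFinset.mpr hm1
    have hv2Vf : v2 ∈ Vf := hfin.mem_toFinset.mpr hm2
    have hsubV : {v1, v2} ⊆ Vf := by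
      intro x hx
      rcases Finset.mem_insert.mp hx with rfl | hx
      · exact hv1Vf
      · rw [Finset.mem_singleton] at hx; subst hx; exact hv2Vf
    have hpair : ({v1, v2} : Finset (Fin n)).card = 2 := by
      rw [Finset.card_insert_of_notMem (by simpa using hv12), Finset.card_singleton]
    set W0 := Vf \ {v1, v2} with hW0
    have hW0card : W0.card = k := by
      rw [hW0, Finset.card_sdiff_of_subset hsubV, hpair, hVfcard]
      omega
    have hWU : W0 ∪ {v1, v2} = Vf := Finset.sdiff_union_of_subset hsubV
    have hc : (W0 ∪ {v1, v2}).card = k + 2 := by rw [hWU]; exact hVfcard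
    set E := Finset.univ.filter (fun e : Sym2 (Fin n) => α e ≠ 0) with hE
    have hmemV : ∀ e ∈ E, (∀ x ∈ e, x ∈ W0 ∪ {v1, v2}) ∧ ¬ e.IsDiag := by
      intro e he
      rw [hE, Finset.mem_filter] at he
      constructor
      · intro x hx
        rw [hWU, hVf, Set.Finite.mem_toFinset]
        exact ⟨e, he.2, hx⟩
      · intro hdg
        exact he.2 (hdiag e hdg)
    have hEcard : k + 1 ≤ E.card := by
      have h1 := card_le_edges α hconn hfin v1 hm1
      rw [Finset.card_erase_of_mem hv1Vf, hVfcard] at h1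
      simpa using h1
    obtain ⟨T, hTsub, hTcard⟩ := Finset.exists_subset_card_eq hEcard
    set A := T.attach.image
      (fun e => trE (W0 ∪ {v1, v2}) hc e.1 (hmemV e.1 (hTsub e.2))) with hA
    have hAcard : A.card = k + 1 := by
      rw [hA, Finset.card_image_of_injOn, Finset.card_attach, hTcard]
      intro x _ y _ hxy
      have hxy2 := congrArg (Sym2.map (fEmb (W0 ∪ {v1, v2}) hc)) (congrArg Subtype.val hxy)
      rw [untr_trE, untr_trE] at hxy2
      exact Subtype.ext hxy2
    have hAim : A.image (fun e' => Sym2.map (fEmb (W0 ∪ {v1, v2}) hc) e'.1) = T := by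
      rw [hA, Finset.image_image]
      have hcomp : ((fun e' : {e' : Sym2 (Fin (k+2)) // ¬ e'.IsDiag} =>
          Sym2.map (fEmb (W0 ∪ {v1, v2}) hc) e'.1) ∘
          (fun e : {x // x ∈ T} => trE (W0 ∪ {v1, v2}) hc e.1 (hmemV e.1 (hTsub e.2))))
          = fun e => e.1 := by
        funext e
        exact untr_trE _ _ _ _
      rw [hcomp, Finset.attach_image_val]
    set β : Sym2 (Fin n) → ℕ := fun e => α e - (if e ∈ T then 1 else 0) with hβ
    have hβα : ∀ e, (if e ∈ T then 1 else 0) + β e = α e := by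
      intro e
      simp only [hβ]
      by_cases he : e ∈ T
      · have hne : α e ≠ 0 := (Finset.mem_filter.mp (hTsub he)).2
        simp only [if_pos he]
        omega
      · simp [if_neg he]
    have hβE : ∀ e, β e ≠ 0 → e ∈ E := by
      intro e hne
      rw [hE, Finset.mem_filter]
      refine ⟨Finset.mem_univ _, ?_⟩
      intro h0
      apply hne
      simp [hβ, h0]
    have hβsum : ∑ e : Sym2 (Fin n), β e = h := by
      have h1 : ∑ e : Sym2 (Fin n), ((if e ∈ T then 1 else 0) + β e) = d := by
        rw [Finset.sum_congr rfl (fun e _ => hβα e)]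
        exact hsum
      rw [Finset.sum_add_distrib] at h1
      have h2 : ∑ e : Sym2 (Fin n), (if e ∈ T then 1 else 0) = T.card := by
        rw [Finset.sum_ite_mem, Finset.univ_inter, ← Finset.card_eq_sum_ones]
      rw [h2, hTcard] at h1
      omega
    set βv : {e' : Sym2 (Fin (k+2)) // ¬ e'.IsDiag} → ℕ :=
      fun e' => β (Sym2.map (fEmb (W0 ∪ {v1, v2}) hc) e'.1) with hβv
    have huntr_inj : Function.Injective
        (fun e' : {e' : Sym2 (Fin (k+2)) // ¬ e'.IsDiag} =>
          Sym2.map (fEmb (W0 ∪ {v1, v2}) hc) e'.1) := by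
      intro a b hab
      exact Subtype.ext (Sym2.map.injective (fEmb_injective _ hc) hab)
    have hβvsum : ∑ e' : {e' : Sym2 (Fin (k+2)) // ¬ e'.IsDiag}, βv e' = h := by
      have himg : ∑ x ∈ Finset.univ.image (fun e' : {e' : Sym2 (Fin (k+2)) // ¬ e'.IsDiag} =>
            Sym2.map (fEmb (W0 ∪ {v1, v2}) hc) e'.1), β x
          = ∑ e' : {e' : Sym2 (Fin (k+2)) // ¬ e'.IsDiag},
            β (Sym2.map (fEmb (W0 ∪ {v1, v2}) hc) e'.1) :=
        Finset.sum_image (fun x _ y _ hxy => huntr_inj hxy)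
      have hsub : ∑ x ∈ Finset.univ.image (fun e' : {e' : Sym2 (Fin (k+2)) // ¬ e'.IsDiag} =>
            Sym2.map (fEmb (W0 ∪ {v1, v2}) hc) e'.1), β x
          = ∑ e : Sym2 (Fin n), β e := by
        refine Finset.sum_subset (Finset.subset_univ _) ?_
        intro e _ hnotim
        by_contra hne
        apply hnotim
        have heE := hβE e hne
        have hgood := hmemV e heE
        rw [Finset.mem_image]
        exact ⟨trE (W0 ∪ {v1, v2}) hc e hgood, Finset.mem_univ _, untr_trE _ _ _ _⟩
      simp only [hβv]
      rw [← himg, hsub]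
      exact hβsum
    set Mβ := (Finset.univ.val.bind fun e' : {e' : Sym2 (Fin (k+2)) // ¬ e'.IsDiag} =>
      Multiset.replicate (βv e') e') with hMβ
    have hMcount : ∀ x, Multiset.count x Mβ = βv x := by
      intro x
      rw [hMβ, Multiset.count_bind]
      have hrw : (Finset.univ.val.map fun e' : {e' : Sym2 (Fin (k+2)) // ¬ e'.IsDiag} =>
          Multiset.count x (Multiset.replicate (βv e') e')).sum
          = ∑ e' : {e' : Sym2 (Fin (k+2)) // ¬ e'.IsDiag},
            Multiset.count x (Multiset.replicate (βv e') e') := rfl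
      rw [hrw]
      simp only [Multiset.count_replicate]
      rw [Finset.sum_ite_eq' Finset.univ x βv]
      simp
    have hMcard : Multiset.card Mβ = h := by
      rw [hMβ, Multiset.card_bind]
      have hrw : (Finset.univ.val.map
          (Multiset.card ∘ fun e' : {e' : Sym2 (Fin (k+2)) // ¬ e'.IsDiag} =>
            Multiset.replicate (βv e') e')).sum
          = ∑ e' : {e' : Sym2 (Fin (k+2)) // ¬ e'.IsDiag},
            Multiset.card (Multiset.replicate (βv e') e') := rfl
      rw [hrw]
      simp only [Multiset.card_replicate]
      exact hβvsum
    obtain ⟨t, htM⟩ := exists_ofFn_eq Mβ hMcard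
    refine ⟨⟨⟨W0, hW0card⟩, ⟨A, hAcard⟩, t⟩, ?_⟩
    funext e
    simp only [Decode]
    rw [dif_pos hc]
    by_cases hg : (∀ x ∈ e, x ∈ W0 ∪ {v1, v2}) ∧ ¬ e.IsDiag
    · rw [dif_pos hg, hAim, htM, hMcount]
      simp only [hβv]
      rw [untr_trE]
      exact hβα e
    · rw [dif_neg hg, hAim]
      have heE : e ∉ E := fun hEm => hg (hmemV e hEm)
      have hα0 : α e = 0 := by
        by_contra hne
        exact heE (by rw [hE, Finset.mem_filter]; exact ⟨Finset.mem_univ _, hne⟩)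
      rw [if_neg (fun hT => heE (hTsub hT)), hα0]
  have hfinal : S.ncard ≤
      n.choose k * (((k+2).choose 2).choose (k+1) * ((k+2).choose 2) ^ h) := by
    refine le_trans (Set.ncard_le_ncard hrange (Set.finite_range _)) ?_
    rw [← Set.image_univ]
    refine le_trans (Set.ncard_image_le Set.finite_univ) ?_
    rw [Set.ncard_univ, Nat.card_eq_fintype_card]
    rw [Fintype.card_prod, Fintype.card_prod, Fintype.card_finset_len, Fintype.card_fin,
      Fintype.card_finset_len, Fintype.card_fun, Fintype.card_fin, Sym2.card_subtype_not_diag,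
      Fintype.card_fin]
  refine le_trans hfinal ?_
  have hm1d : k + 1 ≤ d := by omega
  have b2 : ((k+2).choose 2).choose (k+1) ≤ k.factorial * d ^ (k+1) := by
    have h1 := choose_triangle_le (k+1) (by omega)
    norm_num at h1
    refine le_trans h1 (Nat.mul_le_mul_left _ (Nat.pow_le_pow_left hm1d _))
  have b3 : ((k+2).choose 2) ^ h ≤ d ^ (2*h) := by
    rcases Nat.eq_zero_or_pos h with hz | hpos
    · rw [hz]; simp
    · have hk2d : k + 2 ≤ d := by omega
      rw [pow_mul]
      refine Nat.pow_le_pow_left ?_ _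
      calc (k+2).choose 2 ≤ d.choose 2 := Nat.choose_le_choose 2 hk2d
        _ ≤ d ^ 2 := Nat.choose_le_pow d 2
  calc n.choose k * (((k+2).choose 2).choose (k+1) * ((k+2).choose 2) ^ h)
      ≤ n.choose k * ((k.factorial * d ^ (k+1)) * d ^ (2*h)) :=
        Nat.mul_le_mul_left _ (Nat.mul_le_mul b2 b3)
    _ = (k.factorial * n.choose k) * (d ^ (k+1) * d ^ (2*h)) := by ring
    _ ≤ n ^ k * d ^ (d + h) := by
        have b1 : k.factorial * n.choose k ≤ n ^ k := by
          rw [← Nat.descFactorial_eq_factorial_mul_choose]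
          exact Nat.descFactorial_le_pow n k
        have hpow : d ^ (k+1) * d ^ (2*h) = d ^ (d + h) := by
          rw [← pow_add]
          congr 1
          omega
        rw [hpow]
        exact Nat.mul_le_mul_right _ b1

/-- The number of connected multigraphs on `[n]` with `d` edges,
`d + 1 − h` spanned vertices, containing both vertex 1 and vertex 2, is at most
`n^(d−h−1) · d^(d+h)`. -/
theorem count_connected_multigraphs (n d h : ℕ) (hn : 2 ≤ n) (hd : 1 ≤ d)
    (hh : h ≤ d - 1) :
    {α : Sym2 (Fin n) → ℕ |
        (∀ e : Sym2 (Fin n), e.IsDiag → α e = 0) ∧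
        MGConnected α ∧
        (∑ e : Sym2 (Fin n), α e) = d ∧
        (vertexSet α).ncard = d + 1 - h ∧
        (⟨0, by omega⟩ : Fin n) ∈ vertexSet α ∧
        (⟨1, by omega⟩ : Fin n) ∈ vertexSet α}.ncard ≤
      n ^ (d - h - 1) * d ^ (d + h) := by
  have h01 : (⟨0, by omega⟩ : Fin n) ≠ (⟨1, by omega⟩ : Fin n) := by
    intro hcon
    have := congrArg Fin.val hcon
    simp at this
  exact main_aux n d h hn hd hh _ _ h01
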